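/- The Jones monoid J_n is a regular ^R-semigroup: for every w ∈ J_n, w w^R w = w, where w^R is the image of w under the anti-automorphism of J_n fixing each generator h_i. -/

import Mathlib

namespace Origami

/-- Generators of the origami monoid: a type bit (`true` for α, `false` for β)
and an index in `Fin (n-1)` (so indices `1,…,n-1` are represented by `0,…,n-2`). -/
inductive Gen (n : ℕ) : Type
  | mk (t : Bool) (i : Fin (n - 1))
deriving DecidableEq

/-- Words over the generators. -/
abbrev W (n : ℕ) := FreeMonoid (Gen n)

/-- The word consisting of the single generator of type `t` and index `i`. -/
def go {n : ℕ} (t : Bool) (i : Fin (n - 1)) : W n := FreeMonoid.of (Gen.mk t i)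

/-- `|i - j| = 1`. -/
def adj {n : ℕ} (i j : Fin (n - 1)) : Prop := i.val + 1 = j.val ∨ j.val + 1 = i.val

/-- `|i - j| ≥ 2`. -/
def far {n : ℕ} (i j : Fin (n - 1)) : Prop := i.val + 2 ≤ j.val ∨ j.val + 2 ≤ i.val

/-- The defining relations (1)–(5), (1a), (2a), (3a) of the origami monoid. -/
inductive Rel (n : ℕ) : W n → W n → Prop
  | idem (t : Bool) (i : Fin (n - 1)) : Rel n (go t i * go t i) (go t i)
  | jones (t : Bool) (i j : Fin (n - 1)) (h : adj i j) :
      Rel n (go t i * go t j * go t i) (go t i)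
  | inter (t : Bool) (i j : Fin (n - 1)) (h : i ≠ j) :
      Rel n (go t i * go (!t) j) (go (!t) j * go t i)
  | intra (t : Bool) (i j : Fin (n - 1)) (h : far i j) :
      Rel n (go t i * go t j) (go t j * go t i)
  | idemA (t : Bool) (i : Fin (n - 1)) :
      Rel n (go t i * go (!t) i * (go t i * go (!t) i)) (go t i * go (!t) i)
  | jonesA (t : Bool) (i j : Fin (n - 1)) (h : adj i j) :
      Rel n (go t i * go (!t) i * (go t j * go (!t) j) * (go t i * go (!t) i))
            (go t i * go (!t) i)

/-- The congruence generated by the origami relations. -/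
def oriCon (n : ℕ) : Con (W n) := conGen (Rel n)

/-- The origami monoid `O_n`. -/
abbrev O (n : ℕ) := (oriCon n).Quotient

/-- The image of a generator in `O_n`. -/
def gen {n : ℕ} (t : Bool) (i : Fin (n - 1)) : O n := (oriCon n).mk' (go t i)

/-- The generator `α_i`. -/
def genA {n : ℕ} (i : Fin (n - 1)) : O n := gen true i

/-- The generator `β_i`. -/
def genB {n : ℕ} (i : Fin (n - 1)) : O n := gen false i

end Origami

namespace Jones

/-- Words for the Jones monoid: the generator `h_i` is indexed by `Fin (n-1)`. -/
abbrev JW (n : ℕ) := FreeMonoid (Fin (n - 1))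

/-- The defining relations of the Jones monoid `J_n`. -/
inductive JRel (n : ℕ) : JW n → JW n → Prop
  | idem (i : Fin (n - 1)) : JRel n (FreeMonoid.of i * FreeMonoid.of i) (FreeMonoid.of i)
  | jones (i j : Fin (n - 1)) (h : Origami.adj i j) :
      JRel n (FreeMonoid.of i * FreeMonoid.of j * FreeMonoid.of i) (FreeMonoid.of i)
  | comm (i j : Fin (n - 1)) (h : Origami.far i j) :
      JRel n (FreeMonoid.of i * FreeMonoid.of j) (FreeMonoid.of j * FreeMonoid.of i)

/-- The congruence generated by the Jones relations. -/
def jCon (n : ℕ) : Con (JW n) := conGen (JRel n)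

/-- The Jones monoid `J_n`. -/
abbrev J (n : ℕ) := (jCon n).Quotient

/-- The generator `h_i` of the Jones monoid. -/
def h {n : ℕ} (i : Fin (n - 1)) : J n := (jCon n).mk' (FreeMonoid.of i)

end Jones

namespace JProof
open Jones

open Jones
variable {n : ℕ}
abbrev γ (n : ℕ) := Fin (n - 1)

@[reducible] def wrev (x : JW n) : JW n := FreeMonoid.ofList (FreeMonoid.toList x).reverse

theorem wrev_mul (x y : JW n) : wrev (x * y) = wrev y * wrev x := by
  show FreeMonoid.ofList ((FreeMonoid.toList x ++ FreeMonoid.toList y)).reverse = _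
  rw [List.reverse_append]
  rfl

theorem conRev {x y : JW n} (h : jCon n x y) : jCon n (wrev x) (wrev y) := by
  have h' : ConGen.Rel (JRel n) x y := h
  clear h
  induction h' with
  | of a b hab =>
    cases hab with
    | idem i => exact ConGen.Rel.of _ _ (JRel.idem i)
    | jones i j hij => exact ConGen.Rel.of _ _ (JRel.jones i j hij)
    | comm i j hij =>
      show ConGen.Rel (JRel n) (FreeMonoid.of j * FreeMonoid.of i)
        (FreeMonoid.of i * FreeMonoid.of j)
      exact ConGen.Rel.of _ _ (JRel.comm j i (Or.symm hij))
  | refl a => exact ConGen.Rel.refl _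
  | symm _ ih => exact ConGen.Rel.symm ih
  | trans _ _ ih1 ih2 => exact ConGen.Rel.trans ih1 ih2
  | mul _ _ ih1 ih2 => rw [wrev_mul, wrev_mul]; exact ConGen.Rel.mul ih2 ih1


/-- descending run [i, i-1, ..., i-r] -/
def dRun (i : γ n) (r : ℕ) : List (γ n) :=
  (List.range (r+1)).map fun t => ⟨i.val - t, Nat.lt_of_le_of_lt (Nat.sub_le _ _) i.isLt⟩

@[simp] theorem dRun_zero (i : γ n) : dRun i 0 = [i] := by
  simp [dRun, List.range_succ]

theorem dRun_succ (i : γ n) (r : ℕ) :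
    dRun i (r+1) = dRun i r ++ [⟨i.val - (r+1), Nat.lt_of_le_of_lt (Nat.sub_le _ _) i.isLt⟩] := by
  simp [dRun, List.range_succ]

theorem dRun_cons {a i : γ n} (hai : a.val = i.val + 1) (r : ℕ) :
    dRun a (r+1) = a :: dRun i r := by
  induction r with
  | zero =>
    rw [dRun_succ, dRun_zero, dRun_zero]
    simp [Fin.ext_iff]
    omega
  | succ r ih =>
    rw [dRun_succ, ih, dRun_succ]
    simp [Fin.ext_iff]
    omega

theorem mem_dRun {x i : γ n} {r : ℕ} (hx : x ∈ dRun i r) :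
    i.val - r ≤ x.val ∧ x.val ≤ i.val := by
  simp only [dRun, List.mem_map, List.mem_range] at hx
  obtain ⟨t, ht, rfl⟩ := hx
  exact ⟨Nat.sub_le_sub_left (by omega) _, Nat.sub_le _ _⟩

theorem dRun_length (i : γ n) (r : ℕ) : (dRun i r).length = r + 1 := by
  simp [dRun]

theorem dRun_split {i : γ n} {s r : ℕ} (hsr : s + 1 ≤ r) (hr : r ≤ i.val) :
    dRun i r = dRun i s ++
      dRun ⟨i.val - (s+1), Nat.lt_of_le_of_lt (Nat.sub_le _ _) i.isLt⟩ (r - (s+1)) := by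
  induction r with
  | zero => omega
  | succ r ih =>
    rcases Nat.lt_or_ge (s+1) (r+1) with h | h
    · have hr' : r ≤ i.val := by omega
      have := ih (by omega) hr'
      rw [dRun_succ, this]
      have h2 : r + 1 - (s+1) = (r - (s+1)) + 1 := by omega
      rw [h2, dRun_succ]
      simp only [List.append_assoc, List.append_cancel_left_eq, List.cons.injEq, and_true,
        Fin.mk.injEq]
      omega
    · have hs : s = r := by omega
      subst hs
      rw [dRun_succ, Nat.sub_self, dRun_zero]

def rl' (n : ℕ) (a b : List (γ n)) : Prop :=
  jCon n (FreeMonoid.ofList a) (FreeMonoid.ofList b)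

scoped infix:50 " ≋ " => rl' _

theorem rl_refl (a : List (γ n)) : a ≋ a := (jCon n).refl _
theorem rl_symm {a b : List (γ n)} (h : a ≋ b) : b ≋ a := (jCon n).symm h
theorem rl_trans {a b c : List (γ n)} (h1 : a ≋ b) (h2 : b ≋ c) : a ≋ c := (jCon n).trans h1 h2
theorem rl_append {a b c d : List (γ n)} (h1 : a ≋ b) (h2 : c ≋ d) :
    a ++ c ≋ b ++ d := (jCon n).mul h1 h2
theorem rl_of {a b : List (γ n)} (h : JRel n (FreeMonoid.ofList a) (FreeMonoid.ofList b)) :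
    a ≋ b := ConGen.Rel.of _ _ h
theorem rl_idem (i : γ n) : [i, i] ≋ [i] := rl_of (JRel.idem i)
theorem rl_jones {i j : γ n} (h : i.val + 1 = j.val ∨ j.val + 1 = i.val) :
    [i, j, i] ≋ [i] := rl_of (JRel.jones i j h)
theorem rl_comm {i j : γ n} (h : i.val + 2 ≤ j.val ∨ j.val + 2 ≤ i.val) :
    [i, j] ≋ [j, i] := rl_of (JRel.comm i j h)
theorem rl_ctx {a b : List (γ n)} (p q : List (γ n)) (h : a ≋ b) :
    p ++ a ++ q ≋ p ++ b ++ q := rl_append (rl_append (rl_refl p) h) (rl_refl q)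
theorem rl_of_eq {a b : List (γ n)} (h : a = b) : a ≋ b := h ▸ rl_refl a
theorem rl_rev {a b : List (γ n)} (h : a ≋ b) : a.reverse ≋ b.reverse := conRev h

instance : Trans (rl' n) (rl' n) (rl' n) := ⟨rl_trans⟩

/-- single letter far-commutes past a list -/
theorem far_comm {a : γ n} {s : List (γ n)}
    (hs : ∀ x ∈ s, a.val + 2 ≤ x.val ∨ x.val + 2 ≤ a.val) : [a] ++ s ≋ s ++ [a] := by
  induction s with
  | nil => exact rl_refl [a]
  | cons b t ih =>
    calc [a] ++ (b :: t)
        ≋ ([a, b] : List (γ n)) ++ t := rl_of_eq (by simp)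
      _ ≋ ([b, a] : List (γ n)) ++ t := rl_append (rl_comm (hs b (by simp))) (rl_refl t)
      _ ≋ ([b] : List (γ n)) ++ ([a] ++ t) := rl_of_eq (by simp)
      _ ≋ ([b] : List (γ n)) ++ (t ++ [a]) :=
          rl_append (rl_refl [b]) (ih fun x hx => hs x (by simp [hx]))
      _ ≋ (b :: t) ++ [a] := rl_of_eq (by simp)

/-- two lists of mutually far letters commute -/
theorem far_comm2 {s t : List (γ n)}
    (h : ∀ x ∈ s, ∀ y ∈ t, x.val + 2 ≤ y.val ∨ y.val + 2 ≤ x.val) : s ++ t ≋ t ++ s := by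
  induction s with
  | nil => exact rl_of_eq (by simp)
  | cons a s' ih =>
    calc (a :: s') ++ t
        ≋ [a] ++ (s' ++ t) := rl_of_eq (by simp)
      _ ≋ [a] ++ (t ++ s') :=
          rl_append (rl_refl [a]) (ih fun x hx y hy => h x (by simp [hx]) y hy)
      _ ≋ ([a] ++ t) ++ s' := rl_of_eq (by simp)
      _ ≋ (t ++ [a]) ++ s' :=
          rl_append (far_comm fun x hx => h a (by simp) x hx) (rl_refl s')
      _ ≋ t ++ (a :: s') := rl_of_eq (by simp)

theorem bot_lt {i : γ n} {r : ℕ} : i.val - r < n - 1 :=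
  Nat.lt_of_le_of_lt (Nat.sub_le _ _) i.isLt

/-- collapse: reverse(D) ++ D ≋ [bottom] -/
theorem col1 {i : γ n} {r : ℕ} (hr : r ≤ i.val) :
    (dRun i r).reverse ++ dRun i r ≋ [⟨i.val - r, bot_lt⟩] := by
  induction r with
  | zero =>
    have e : (⟨i.val - 0, bot_lt⟩ : γ n) = i := Fin.ext (by simp)
    rw [e, dRun_zero]
    exact rl_idem i
  | succ r ih =>
    set b : γ n := ⟨i.val - (r+1), bot_lt⟩ with hb
    have hD := dRun_succ i r
    have e1 : (dRun i (r+1)).reverse ++ dRun i (r+1) =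
        [b] ++ ((dRun i r).reverse ++ dRun i r) ++ [b] := by
      rw [hD]; simp [List.reverse_append, hb]
    have e2 : [b] ++ [(⟨i.val - r, bot_lt⟩ : γ n)] ++ [b] ≋ [b] :=
      rl_jones (Or.inl (show b.val + 1 = i.val - r by rw [hb]; simp; omega))
    calc (dRun i (r+1)).reverse ++ dRun i (r+1)
        ≋ [b] ++ ((dRun i r).reverse ++ dRun i r) ++ [b] := rl_of_eq e1
      _ ≋ [b] ++ [(⟨i.val - r, bot_lt⟩ : γ n)] ++ [b] := rl_ctx [b] [b] (ih (by omega))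
      _ ≋ [b] := e2

theorem col2' {i : γ n} : ∀ (r : ℕ) (x : γ n), r ≤ i.val → x.val + 1 = i.val - r →
    dRun i r ++ [x] ++ (dRun i r).reverse ≋ [i] := by
  intro r
  induction r with
  | zero =>
    intro x _ hx
    rw [dRun_zero]
    exact rl_jones (Or.inr (by simpa using hx))
  | succ r ih =>
    intro x hr hx
    set b : γ n := ⟨i.val - (r+1), bot_lt⟩ with hb
    calc dRun i (r+1) ++ [x] ++ (dRun i (r+1)).reverse
        ≋ dRun i r ++ ([b, x, b] ++ (dRun i r).reverse) := by
          apply rl_of_eq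
          rw [dRun_succ]
          simp [hb]
      _ ≋ dRun i r ++ ([b] ++ (dRun i r).reverse) := by
          have hj : ([b, x, b] : List (γ n)) ≋ [b] :=
            rl_jones (Or.inr (show x.val + 1 = b.val from hx))
          exact rl_append (rl_refl _) (rl_append hj (rl_refl _))
      _ ≋ [i] := by
          have hby : b.val + 1 = i.val - r := by
            show i.val - (r+1) + 1 = i.val - r
            omega
          have := ih b (by omega) hby
          exact rl_trans (rl_of_eq (by simp)) this

theorem col2 {i : γ n} {r : ℕ} (hr : r ≤ i.val) :
    dRun i r ++ (dRun i r).reverse ≋ [i] := by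
  cases r with
  | zero => rw [dRun_zero]; exact rl_idem i
  | succ r =>
    set b : γ n := ⟨i.val - (r+1), bot_lt⟩ with hb
    calc dRun i (r+1) ++ (dRun i (r+1)).reverse
        ≋ dRun i r ++ ([b, b] ++ (dRun i r).reverse) := by
          apply rl_of_eq
          rw [dRun_succ]
          simp [hb]
      _ ≋ dRun i r ++ ([b] ++ (dRun i r).reverse) :=
          rl_append (rl_refl _) (rl_append (rl_idem b) (rl_refl _))
      _ ≋ [i] := by
          have hby : b.val + 1 = i.val - r := by
            show i.val - (r+1) + 1 = i.val - r
            omega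
          have := col2' r b (by omega) hby
          exact rl_trans (rl_of_eq (by simp)) this

theorem head_idem {i : γ n} {r : ℕ} (hr : r ≤ i.val) : [i] ++ dRun i r ≋ dRun i r := by
  cases r with
  | zero => rw [dRun_zero]; exact rl_idem i
  | succ t =>
    have hc : dRun i (t+1) = i :: dRun ⟨i.val - 1, bot_lt⟩ t := by
      apply dRun_cons
      show i.val = i.val - 1 + 1
      omega
    rw [hc]
    exact rl_append (rl_idem i) (rl_refl _)

theorem jones_run {a i : γ n} (ha : a.val + 1 = i.val) {r : ℕ} (h1 : 1 ≤ r)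
    (hra : r - 1 ≤ a.val) : [a] ++ dRun i r ≋ dRun a (r-1) := by
  have hc : dRun i r = i :: dRun a (r-1) := by
    have : r = (r-1) + 1 := by omega
    rw [this]
    exact dRun_cons (by omega) _
  rw [hc]
  rcases Nat.eq_zero_or_pos (r-1) with h0 | h0
  · rw [h0, dRun_zero]
    exact rl_jones (Or.inl ha)
  · have hc2 : dRun a (r-1) = a :: dRun ⟨a.val - 1, bot_lt⟩ (r-1-1) := by
      have : r - 1 = (r-1-1) + 1 := by omega
      rw [this]
      exact dRun_cons (by simp; omega) _
    rw [hc2]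
    calc [a] ++ (i :: a :: dRun ⟨a.val - 1, bot_lt⟩ (r-1-1))
        ≋ [a, i, a] ++ dRun ⟨a.val - 1, bot_lt⟩ (r-1-1) := rl_of_eq (by simp)
      _ ≋ [a] ++ dRun ⟨a.val - 1, bot_lt⟩ (r-1-1) :=
          rl_append (rl_jones (Or.inl ha)) (rl_refl _)
      _ ≋ a :: dRun ⟨a.val - 1, bot_lt⟩ (r-1-1) := rl_of_eq (by simp)

theorem Nlem : ∀ w : List (γ n), (w ≋ []) ∨ ∃ (i : γ n) (r : ℕ) (u : List (γ n)),
    r ≤ i.val ∧ (w ≋ dRun i r ++ u) ∧ (∀ x ∈ u, i.val - r < x.val) ∧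
    r + 1 + u.length ≤ w.length ∧ (∀ c : ℕ, (∀ x ∈ w, c ≤ x.val) → c ≤ i.val - r) := by
  intro w
  induction w with
  | nil => exact Or.inl (rl_refl [])
  | cons a w' ih =>
    right
    rcases ih with hnil | ⟨i, r, u, hr, hw, hu, hl, hmin⟩
    · refine ⟨a, 0, [], by simp, ?_, by simp, by simp, ?_⟩
      · rw [dRun_zero]
        calc (a :: w') ≋ [a] ++ w' := rl_of_eq (by simp)
          _ ≋ [a] ++ [] := rl_append (rl_refl [a]) hnil
          _ ≋ [a] ++ [] := rl_refl _
      · intro c hc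
        simpa using hc a (by simp)
    · have hstep : (a :: w') ≋ [a] ++ (dRun i r ++ u) :=
        rl_append (rl_refl [a]) hw
      rcases Nat.lt_or_ge a.val (i.val - r) with hC1 | hge
      · -- C1 : a below bottom
        refine ⟨a, 0, dRun i r ++ u, by simp, ?_, ?_, ?_, ?_⟩
        · rw [dRun_zero]; exact hstep
        · intro x hx
          rcases List.mem_append.1 hx with h | h
          · have := (mem_dRun h).1; omega
          · have := hu x h; omega
        · simp only [dRun_zero, List.length_append, dRun_length, List.length_cons]
          simp [dRun_length] at hl ⊢
          omega
        · intro c hc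
          simpa using hc a (by simp)
      · rcases Nat.lt_or_ge a.val i.val with hC3 | hge2
        · -- C3 : bottom ≤ a < i
          rcases Nat.eq_or_lt_of_le (Nat.succ_le_of_lt hC3) with hsub1 | hsub2
          · -- a+1 = i
            have h1r : 1 ≤ r := by omega
            have hjr : [a] ++ dRun i r ≋ dRun a (r-1) :=
              jones_run hsub1 h1r (by omega)
            refine ⟨a, r-1, u, by omega, ?_, ?_, ?_, ?_⟩
            · calc (a :: w') ≋ [a] ++ (dRun i r ++ u) := hstep
                _ ≋ ([a] ++ dRun i r) ++ u := rl_of_eq (by simp)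
                _ ≋ dRun a (r-1) ++ u := rl_append hjr (rl_refl u)
            · intro x hx
              have := hu x hx
              omega
            · simp [dRun_length] at hl ⊢
              omega
            · intro c hc
              have := hmin c (fun x hx => hc x (by simp [hx]))
              omega
          · -- a+2 ≤ i
            set s : ℕ := i.val - a.val - 2 with hs
            set i2 : γ n := ⟨i.val - (s+1), bot_lt⟩ with hi2
            have hi2v : i2.val = a.val + 1 := by rw [hi2]; simp; omega
            have hsplit : dRun i r = dRun i s ++ dRun i2 (r - (s+1)) :=
              dRun_split (by omega) hr
            set r2 : ℕ := r - (s+1) with hr2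
            have h1r2 : 1 ≤ r2 := by omega
            have hfar1 : [a] ++ dRun i s ≋ dRun i s ++ [a] := by
              apply far_comm
              intro x hx
              have := (mem_dRun hx).1
              omega
            have hjr : [a] ++ dRun i2 r2 ≋ dRun a (r2-1) :=
              jones_run (by omega) h1r2 (by omega)
            have hfar2 : dRun i s ++ dRun a (r2-1) ≋ dRun a (r2-1) ++ dRun i s := by
              apply far_comm2
              intro x hx y hy
              have h1 := (mem_dRun hx).1
              have h2 := (mem_dRun hy).2
              omega
            refine ⟨a, r2-1, dRun i s ++ u, by omega, ?_, ?_, ?_, ?_⟩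
            · calc (a :: w') ≋ [a] ++ (dRun i r ++ u) := hstep
                _ ≋ ([a] ++ dRun i s) ++ (dRun i2 r2 ++ u) := by
                    apply rl_of_eq
                    rw [hsplit]
                    simp
                _ ≋ (dRun i s ++ [a]) ++ (dRun i2 r2 ++ u) :=
                    rl_append hfar1 (rl_refl _)
                _ ≋ dRun i s ++ (([a] ++ dRun i2 r2) ++ u) := rl_of_eq (by simp)
                _ ≋ dRun i s ++ (dRun a (r2-1) ++ u) :=
                    rl_append (rl_refl _) (rl_append hjr (rl_refl u))
                _ ≋ (dRun i s ++ dRun a (r2-1)) ++ u := rl_of_eq (by simp)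
                _ ≋ (dRun a (r2-1) ++ dRun i s) ++ u :=
                    rl_append hfar2 (rl_refl u)
                _ ≋ dRun a (r2-1) ++ (dRun i s ++ u) := rl_of_eq (by simp)
            · intro x hx
              rcases List.mem_append.1 hx with h | h
              · have := (mem_dRun h).1; omega
              · have := hu x h; omega
            · simp [dRun_length] at hl ⊢
              omega
            · intro c hc
              have := hmin c (fun x hx => hc x (by simp [hx]))
              omega
        · rcases Nat.eq_or_lt_of_le hge2 with hC4 | hge3
          · -- C4 : a = i
            have hae : a = i := Fin.ext (by omega)
            refine ⟨i, r, u, hr, ?_, hu, ?_, ?_⟩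
            · calc (a :: w') ≋ [a] ++ (dRun i r ++ u) := hstep
                _ ≋ ([i] ++ dRun i r) ++ u := rl_of_eq (by rw [hae]; simp)
                _ ≋ dRun i r ++ u := rl_append (head_idem hr) (rl_refl u)
            · simp at hl ⊢; omega
            · intro c hc
              exact hmin c (fun x hx => hc x (by simp [hx]))
          · rcases Nat.eq_or_lt_of_le (Nat.succ_le_of_lt hge3) with hC5 | hC6
            · -- C5 : a = i + 1
              refine ⟨a, r+1, u, by omega, ?_, ?_, ?_, ?_⟩
              · calc (a :: w') ≋ [a] ++ (dRun i r ++ u) := hstep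
                  _ ≋ dRun a (r+1) ++ u := by
                      apply rl_of_eq
                      rw [dRun_cons (i := i) (by omega) r]
                      simp
              · intro x hx
                have := hu x hx
                omega
              · simp [dRun_length] at hl ⊢
                omega
              · intro c hc
                have := hmin c (fun x hx => hc x (by simp [hx]))
                omega
            · -- C6 : a > i + 1
              refine ⟨i, r, [a] ++ u, hr, ?_, ?_, ?_, ?_⟩
              · have hfar : [a] ++ dRun i r ≋ dRun i r ++ [a] := by
                  apply far_comm
                  intro x hx
                  have := (mem_dRun hx).2
                  omega
                calc (a :: w') ≋ [a] ++ (dRun i r ++ u) := hstep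
                  _ ≋ ([a] ++ dRun i r) ++ u := rl_of_eq (by simp)
                  _ ≋ (dRun i r ++ [a]) ++ u := rl_append hfar (rl_refl u)
                  _ ≋ dRun i r ++ ([a] ++ u) := rl_of_eq (by simp)
              · intro x hx
                rcases List.mem_append.1 hx with h | h
                · simp at h
                  rw [h]
                  omega
                · have := hu x h; omega
              · simp at hl ⊢; omega
              · intro c hc
                have := hmin c (fun x hx => hc x (by simp [hx]))
                omega

theorem rl_rw {a b : List (γ n)} (p q : List (γ n)) (h : a ≋ b) {x y : List (γ n)}
    (hx : x = p ++ a ++ q) (hy : y = p ++ b ++ q) : x ≋ y := by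
  subst hx; subst hy; exact rl_ctx p q h

theorem dualN : ∀ w : List (γ n), (w ≋ []) ∨ ∃ (i : γ n) (r : ℕ) (z : List (γ n)),
    r ≤ i.val ∧ (w ≋ z ++ (dRun i r).reverse) ∧ (∀ x ∈ z, i.val - r < x.val) ∧
    r + 1 + z.length ≤ w.length ∧ (∀ c : ℕ, (∀ x ∈ w, c ≤ x.val) → c ≤ i.val - r) := by
  intro w
  rcases Nlem w.reverse with hnil | ⟨i, r, u, hr, hw, hu, hl, hmin⟩
  · left
    have := rl_rev hnil
    simpa using this
  · right
    refine ⟨i, r, u.reverse, hr, ?_, ?_, ?_, ?_⟩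
    · have := rl_rev hw
      simpa using this
    · intro x hx
      exact hu x (by simpa using hx)
    · simpa using hl
    · intro c hc
      exact hmin c (fun x hx => hc x (by simpa using hx))

theorem rev_dRun_decomp (i : γ n) (r : ℕ) :
    ∃ T : List (γ n), (dRun i r).reverse = [⟨i.val - r, bot_lt⟩] ++ T := by
  cases r with
  | zero =>
    refine ⟨[], ?_⟩
    rw [dRun_zero]
    simp [Fin.ext_iff]
  | succ t =>
    refine ⟨(dRun i t).reverse, ?_⟩
    rw [dRun_succ]
    simp

def RegP (w : List (γ n)) : Prop := w ++ w.reverse ++ w ≋ w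

theorem reg_congr {w w' : List (γ n)} (h : w ≋ w') (h' : RegP w') : RegP w := by
  unfold RegP at *
  exact rl_trans (rl_append (rl_append h (rl_rev h)) h) (rl_trans h' (rl_symm h))

theorem regP_nil : RegP ([] : List (γ n)) := rl_refl []

theorem regP_single (j : γ n) : RegP [j] := by
  unfold RegP
  calc ([j] ++ [j].reverse ++ [j] : List (γ n))
      ≋ [j] ++ [j, j] := rl_of_eq (by simp)
    _ ≋ [j] ++ [j] := rl_append (rl_refl [j]) (rl_idem j)
    _ ≋ [j] := rl_idem j

theorem dmaster {j : γ n} {z A' : List (γ n)} (hreg : RegP ([j] ++ z.reverse)) :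
    z ++ [j] ++ z.reverse ++ z ++ [j] ++ A' ≋ z ++ [j] ++ A' := by
  unfold RegP at hreg
  have h2 : [j] ++ z.reverse ++ z ++ [j] ++ z.reverse ≋ [j] ++ z.reverse := by
    calc [j] ++ z.reverse ++ z ++ [j] ++ z.reverse
        ≋ ([j] ++ z.reverse ++ z) ++ [j, j] ++ z.reverse :=
          rl_rw ([j] ++ z.reverse ++ z) z.reverse (rl_symm (rl_idem j)) (by simp) (by simp)
      _ ≋ [j] ++ z.reverse := rl_trans (rl_of_eq (by simp)) hreg
  have h3 := rl_rev h2
  have h4 : z ++ [j] ++ z.reverse ++ z ++ [j] ≋ z ++ [j] :=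
    rl_trans (rl_of_eq (by simp)) (rl_trans h3 (rl_of_eq (by simp)))
  calc z ++ [j] ++ z.reverse ++ z ++ [j] ++ A'
      ≋ (z ++ [j] ++ z.reverse ++ z ++ [j]) ++ A' := rl_of_eq (by simp)
    _ ≋ (z ++ [j]) ++ A' := rl_append h4 (rl_refl A')
    _ ≋ z ++ [j] ++ A' := rl_of_eq (by simp)

theorem core {L : ℕ} (ihL : ∀ v : List (γ n), v.length ≤ L → RegP v)
    {j : γ n} {y : List (γ n)} (hy : ∀ x ∈ y, j.val < x.val) (hyL : y.length ≤ L) :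
    RegP ([j] ++ y) := by
  rcases dualN y with hnil | ⟨i2, r2, z2, hr2, hyz, hz2, hlen2, hmin2⟩
  · exact reg_congr
      (rl_trans (rl_append (rl_refl [j]) hnil) (rl_of_eq (by simp)))
      (regP_single j)
  · set j2 : γ n := ⟨i2.val - r2, bot_lt⟩ with hj2
    set A2 := (dRun i2 r2).reverse with hA2
    have hjj2 : j.val + 1 ≤ i2.val - r2 :=
      hmin2 (j.val + 1) (fun x hx => hy x hx)
    have hA2mem : ∀ x ∈ A2, i2.val - r2 ≤ x.val := by
      intro x hx
      rw [hA2, List.mem_reverse] at hx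
      exact (mem_dRun hx).1
    have hA2len : A2.length = r2 + 1 := by
      rw [hA2]; simp [dRun_length]
    have htrans : [j] ++ y ≋ [j] ++ (z2 ++ A2) := rl_append (rl_refl [j]) hyz
    apply reg_congr htrans
    rcases eq_or_lt_of_le hjj2 with heq | hlt
    · -- j2 = j + 1 : the key chain
      have hfz : [j] ++ z2 ≋ z2 ++ [j] := by
        apply far_comm
        intro x hx
        have := hz2 x hx
        exact Or.inl (by omega)
      have hfzr : [j] ++ z2.reverse ≋ z2.reverse ++ [j] := by
        apply far_comm
        intro x hx
        rw [List.mem_reverse] at hx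
        have := hz2 x hx
        exact Or.inl (by omega)
      have hfzz : [j] ++ (z2.reverse ++ z2) ≋ (z2.reverse ++ z2) ++ [j] := by
        apply far_comm
        intro x hx
        rcases List.mem_append.1 hx with h | h
        · rw [List.mem_reverse] at h
          have := hz2 x h
          exact Or.inl (by omega)
        · have := hz2 x h
          exact Or.inl (by omega)
      have hregz2 : RegP z2 := ihL z2 (by omega)
      unfold RegP
      calc ([j] ++ (z2 ++ A2)) ++ ([j] ++ (z2 ++ A2)).reverse ++ ([j] ++ (z2 ++ A2))
          ≋ ([j] ++ z2) ++ (A2 ++ dRun i2 r2) ++ (z2.reverse ++ [j] ++ [j] ++ z2 ++ A2) := by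
            apply rl_of_eq
            simp [hA2]
        _ ≋ ([j] ++ z2) ++ [j2] ++ (z2.reverse ++ [j] ++ [j] ++ z2 ++ A2) :=
            rl_rw ([j] ++ z2) (z2.reverse ++ [j] ++ [j] ++ z2 ++ A2) (col1 hr2)
              rfl rfl
        _ ≋ ([j] ++ z2 ++ [j2] ++ z2.reverse) ++ [j, j] ++ (z2 ++ A2) := rl_of_eq (by simp)
        _ ≋ ([j] ++ z2 ++ [j2] ++ z2.reverse) ++ [j] ++ (z2 ++ A2) :=
            rl_rw _ _ (rl_idem j) rfl rfl
        _ ≋ ([j] ++ z2) ++ ([j2] ++ z2.reverse ++ [j] ++ z2 ++ A2) := rl_of_eq (by simp)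
        _ ≋ (z2 ++ [j]) ++ ([j2] ++ z2.reverse ++ [j] ++ z2 ++ A2) :=
            rl_append hfz (rl_refl _)
        _ ≋ (z2 ++ [j] ++ [j2]) ++ ([j] ++ z2.reverse) ++ (z2 ++ A2) := by
            apply rl_rw (z2 ++ [j] ++ [j2]) (z2 ++ A2) (rl_symm hfzr) <;> simp
        _ ≋ z2 ++ [j, j2, j] ++ (z2.reverse ++ z2 ++ A2) := rl_of_eq (by simp)
        _ ≋ z2 ++ [j] ++ (z2.reverse ++ z2 ++ A2) :=
            rl_rw z2 (z2.reverse ++ z2 ++ A2) (rl_jones (Or.inl heq)) rfl rfl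
        _ ≋ z2 ++ ([j] ++ (z2.reverse ++ z2)) ++ A2 := rl_of_eq (by simp)
        _ ≋ z2 ++ ((z2.reverse ++ z2) ++ [j]) ++ A2 :=
            rl_rw z2 A2 hfzz (by simp) (by simp)
        _ ≋ (z2 ++ z2.reverse ++ z2) ++ ([j] ++ A2) := rl_of_eq (by simp)
        _ ≋ z2 ++ ([j] ++ A2) := rl_append hregz2 (rl_refl _)
        _ ≋ ([j] ++ z2) ++ A2 := by
            apply rl_rw [] A2 (rl_symm hfz) <;> simp
        _ ≋ [j] ++ (z2 ++ A2) := rl_of_eq (by simp)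
    · -- j + 2 ≤ j2 : far case
      set u' := z2 ++ A2 with hu'
      have hfar : [j] ++ u' ≋ u' ++ [j] := by
        apply far_comm
        intro x hx
        rcases List.mem_append.1 hx with h | h
        · have := hz2 x h
          exact Or.inl (by omega)
        · have := hA2mem x h
          exact Or.inl (by omega)
      have hfarr : [j] ++ u'.reverse ≋ u'.reverse ++ [j] := by
        apply far_comm
        intro x hx
        rw [List.mem_reverse] at hx
        rcases List.mem_append.1 hx with h | h
        · have := hz2 x h
          exact Or.inl (by omega)
        · have := hA2mem x h
          exact Or.inl (by omega)
      have hfar2 : [j] ++ (u' ++ u'.reverse) ≋ (u' ++ u'.reverse) ++ [j] := by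
        calc [j] ++ (u' ++ u'.reverse) ≋ ([j] ++ u') ++ u'.reverse := rl_of_eq (by simp)
          _ ≋ (u' ++ [j]) ++ u'.reverse := rl_append hfar (rl_refl _)
          _ ≋ u' ++ ([j] ++ u'.reverse) := rl_of_eq (by simp)
          _ ≋ u' ++ (u'.reverse ++ [j]) := rl_append (rl_refl u') hfarr
          _ ≋ (u' ++ u'.reverse) ++ [j] := rl_of_eq (by simp)
      have hru' : RegP u' := by
        apply ihL
        rw [hu']
        simp only [List.length_append]
        omega
      unfold RegP
      calc ([j] ++ u') ++ ([j] ++ u').reverse ++ ([j] ++ u')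
          ≋ ([j] ++ (u' ++ u'.reverse)) ++ [j, j] ++ u' := rl_of_eq (by simp)
        _ ≋ ([j] ++ (u' ++ u'.reverse)) ++ [j] ++ u' :=
            rl_rw _ _ (rl_idem j) rfl rfl
        _ ≋ ((u' ++ u'.reverse) ++ [j]) ++ [j] ++ u' :=
            rl_append (rl_append hfar2 (rl_refl _)) (rl_refl _)
        _ ≋ (u' ++ u'.reverse) ++ [j, j] ++ u' := rl_of_eq (by simp)
        _ ≋ (u' ++ u'.reverse) ++ [j] ++ u' :=
            rl_rw _ _ (rl_idem j) rfl rfl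
        _ ≋ (u' ++ u'.reverse) ++ ([j] ++ u') := rl_of_eq (by simp)
        _ ≋ (u' ++ u'.reverse) ++ (u' ++ [j]) := rl_append (rl_refl _) hfar
        _ ≋ (u' ++ u'.reverse ++ u') ++ [j] := rl_of_eq (by simp)
        _ ≋ u' ++ [j] := rl_append hru' (rl_refl _)
        _ ≋ [j] ++ u' := rl_symm hfar

theorem regAll : ∀ (L : ℕ) (w : List (γ n)), w.length ≤ L → RegP w := by
  intro L
  induction L with
  | zero =>
    intro w hw
    have hwnil : w = [] := List.length_eq_zero_iff.1 (by omega)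
    rw [hwnil]; exact regP_nil
  | succ L ihL =>
    intro w hw
    rcases dualN w with hnil | ⟨i, r, z, hr, hwz, hz, hlen, hmin⟩
    · exact reg_congr hnil regP_nil
    · set j : γ n := ⟨i.val - r, bot_lt⟩ with hj
      obtain ⟨T, hT⟩ := rev_dRun_decomp i r
      have hzL : z.reverse.length ≤ L := by simp; omega
      have hregjy : RegP ([j] ++ z.reverse) := by
        apply core (L := L) (fun v hv => ihL v hv)
        · intro x hx
          rw [List.mem_reverse] at hx
          exact hz x hx
        · exact hzL
      apply reg_congr hwz
      unfold RegP
      calc (z ++ (dRun i r).reverse) ++ (z ++ (dRun i r).reverse).reverse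
            ++ (z ++ (dRun i r).reverse)
          ≋ z ++ ((dRun i r).reverse ++ dRun i r)
              ++ (z.reverse ++ (z ++ (dRun i r).reverse)) := rl_of_eq (by simp)
        _ ≋ z ++ [j] ++ (z.reverse ++ (z ++ (dRun i r).reverse)) :=
            rl_rw z _ (col1 hr) rfl rfl
        _ ≋ z ++ [j] ++ z.reverse ++ z ++ [j] ++ T := rl_of_eq (by rw [hT]; simp [hj])
        _ ≋ z ++ [j] ++ T := dmaster hregjy
        _ ≋ z ++ (dRun i r).reverse := rl_of_eq (by rw [hT]; simp [hj])

theorem regList (w : List (γ n)) : w ++ w.reverse ++ w ≋ w := regAll w.length w le_rfl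


end JProof

open Jones in
/-- The Jones monoid is a regular `^R`-semigroup: the reversal anti-automorphism `R`
(fixing each generator `h_i`) satisfies `w * R w * w = w` for every `w`. -/
theorem jones_regular_R (n : ℕ) :
    ∃ R : J n → J n,
      (∀ i, R (h i) = h i) ∧
      (∀ v w : J n, R (v * w) = R w * R v) ∧
      R 1 = 1 ∧
      (∀ w : J n, w * R w * w = w) := by
  classical
  refine ⟨Quotient.map' (fun w => JProof.wrev w) (fun a b hab => JProof.conRev hab),
    ?_, ?_, ?_, ?_⟩
  · intro i
    rfl
  · intro v w
    induction v using Con.induction_on with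
    | H a =>
      induction w using Con.induction_on with
      | H b =>
        show Quotient.map' _ _ ((a : J n) * (b : J n)) = _
        rw [← Con.coe_mul]
        show ((JProof.wrev (a * b) : JW n) : J n) = _
        rw [JProof.wrev_mul]
        rfl
  · rfl
  · intro w
    induction w using Con.induction_on with
    | H a =>
      show ((a : JW n) : J n) * ((JProof.wrev a : JW n) : J n) * ((a : JW n) : J n)
          = ((a : JW n) : J n)
      rw [← Con.coe_mul, ← Con.coe_mul]
      rw [Con.eq]
      exact JProof.regList (FreeMonoid.toList a)
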